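/- Let S be a reduced affinoid Q_p-algebra, G a profinite group as in Tate/Greenberg finiteness (e.g., G_{K,Σ} or a local Galois group), and V a locally free finite S-module with continuous G-action. Suppose Sp S admits an admissible affinoid covering (Sp S_n) such that each H^i(G, V ⊗_S S_n) is a finite S_n-module and H^i(G, V ⊗_S S_n) = H^i(G,V) ⊗_S S_n (by flatness of S_n over S). Then H^i(G, V) is a finite S-module. -/

import Mathlib

open scoped TensorProduct

/-- Vanishing descends along a flat covering that is jointly surjective on primes. -/
theorem aux_subsingleton {S : Type*} [CommRing S] {ι : Type*}
    (A : ι → Type*) [∀ n, CommRing (A n)] [∀ n, Algebra S (A n)]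
    (hflat : ∀ n, Module.Flat S (A n))
    (hcover : ∀ P : Ideal S, P.IsPrime →
      ∃ (n : ι) (Q : Ideal (A n)), Q.IsPrime ∧ Q.comap (algebraMap S (A n)) = P)
    (M : Type*) [AddCommGroup M] [Module S M]
    (hsub : ∀ n, Subsingleton (A n ⊗[S] M)) : Subsingleton M := by
  by_contra h
  rw [not_subsingleton_iff_nontrivial] at h
  obtain ⟨m, hm⟩ := exists_ne (0 : M)
  set I : Ideal S := LinearMap.ker (LinearMap.toSpanSingleton S M m) with hIdef
  have hI : I ≠ ⊤ := by
    intro htop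
    apply hm
    have h1 : (1 : S) ∈ I := htop ▸ Submodule.mem_top
    have h2 := h1
    rw [hIdef, LinearMap.mem_ker] at h2
    simpa using h2
  obtain ⟨P, hP, hIP⟩ := Ideal.exists_le_maximal I hI
  obtain ⟨n, Q, hQ, hQP⟩ := hcover P hP.isPrime
  haveI := hflat n
  haveI := hsub n
  set f : (S ⧸ I) →ₗ[S] M := Submodule.liftQ I (LinearMap.toSpanSingleton S M m) le_rfl with hf
  have hfinj : Function.Injective f :=
    LinearMap.ker_eq_bot.1 (Submodule.ker_liftQ_eq_bot I _ le_rfl le_rfl)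
  have hinj : Function.Injective (LinearMap.lTensor (A n) f) :=
    Module.Flat.lTensor_preserves_injective_linearMap f hfinj
  haveI : Subsingleton ((A n) ⊗[S] (S ⧸ I)) := hinj.subsingleton
  haveI : Subsingleton ((A n) ⧸ (I • (⊤ : Submodule S (A n)))) :=
    (TensorProduct.tensorQuotEquivQuotSMul (A n) I).symm.toEquiv.subsingleton
  have htop : I • (⊤ : Submodule S (A n)) = ⊤ :=
    Submodule.Quotient.subsingleton_iff.1 this
  rw [Ideal.smul_top_eq_map] at htop
  have h1 : (1 : A n) ∈ Ideal.map (algebraMap S (A n)) I := by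
    have : (1 : A n) ∈ (Ideal.map (algebraMap S (A n)) I).restrictScalars S :=
      htop ▸ Submodule.mem_top
    exact this
  have hle : Ideal.map (algebraMap S (A n)) I ≤ Q :=
    Ideal.map_le_iff_le_comap.2 (hQP ▸ hIP)
  exact hQ.ne_top ((Ideal.eq_top_iff_one _).2 (hle h1))

/-- Kiehl-type gluing of finiteness: if `Sp S` has an admissible (finite, flat,
jointly surjective on primes) affinoid covering `Sp Sₙ` such that each
`H^i(G, V ⊗ Sₙ) = H^i(G,V) ⊗_S Sₙ` is a finite `Sₙ`-module, then `H^i(G,V)` is a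
finite `S`-module.  Here `H` stands for the continuous cohomology `S`-module
`H^i(G,V)` of the profinite group `G` with coefficients in the locally free
`S`-module `V`. -/
theorem stmt_16 {S : Type*} [CommRing S] (p : ℕ) [Fact p.Prime]
    (G : Type*) [Group G] [TopologicalSpace G] [IsTopologicalGroup G]
    [CompactSpace G] [TotallyDisconnectedSpace G]
    (V : Type*) [AddCommGroup V] [Module S V] [Module.Finite S V] [Module.Projective S V]
    (ι : Type*) [Finite ι]
    (A : ι → Type*) [∀ n, CommRing (A n)] [∀ n, Algebra S (A n)]
    (hflat : ∀ n, Module.Flat S (A n))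
    (hcover : ∀ P : Ideal S, P.IsPrime →
      ∃ (n : ι) (Q : Ideal (A n)), Q.IsPrime ∧ Q.comap (algebraMap S (A n)) = P)
    (H : Type*) [AddCommGroup H] [Module S H]   -- `H = H^i(G,V)`
    (i : ℕ)
    (hfin : ∀ n, Module.Finite (A n) (A n ⊗[S] H)) :
    Module.Finite S H := by
  classical
  -- choose generators of each `A n ⊗ H` over `A n`
  choose s hs using fun n => (hfin n).fg_top
  -- find finitely generated submodules of `H` whose base change contains the generators
  choose N' hN'fin hN'sub using fun n =>
    TensorProduct.exists_finite_submodule_right_of_setFinite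
      ((s n : Set ((A n) ⊗[S] H))) (s n).finite_toSet
  set N : Submodule S H := ⨆ n, N' n with hN
  have hNfg : N.FG := Submodule.fg_iSup _ fun n => Module.Finite.iff_fg.1 (hN'fin n)
  -- the base change of the inclusion `N ⊆ H` is surjective
  have hsurj : ∀ n, Function.Surjective (LinearMap.lTensor (A n) N.subtype) := by
    intro n
    have hincl : (N' n).subtype = N.subtype ∘ₗ Submodule.inclusion (le_iSup N' n) := by
      ext x; rfl
    have hsub : (s n : Set ((A n) ⊗[S] H)) ⊆
        Set.range (LinearMap.lTensor (A n) N.subtype) := by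
      intro x hx
      obtain ⟨y, hy⟩ := hN'sub n hx
      refine ⟨LinearMap.lTensor (A n) (Submodule.inclusion (le_iSup N' n)) y, ?_⟩
      rw [← hy, hincl, LinearMap.lTensor_comp]; rfl
    have hbc : LinearMap.range (N.subtype.baseChange (A n)) = ⊤ := by
      rw [← top_le_iff, ← hs n, Submodule.span_le]
      intro x hx
      obtain ⟨y, hy⟩ := hsub hx
      exact ⟨y, by rw [LinearMap.baseChange_eq_ltensor]; exact hy⟩
    intro x
    obtain ⟨y, hy⟩ := (LinearMap.range_eq_top.1 hbc) x
    exact ⟨y, by rw [← LinearMap.baseChange_eq_ltensor]; exact hy⟩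
  -- hence each `A n ⊗ (H ⧸ N)` vanishes
  have hzero : ∀ n, Subsingleton ((A n) ⊗[S] (H ⧸ N)) := by
    intro n
    refine subsingleton_of_forall_eq 0 fun x => ?_
    obtain ⟨y, rfl⟩ := LinearMap.lTensor_surjective (A n) (Submodule.mkQ_surjective N) x
    obtain ⟨z, rfl⟩ := hsurj n y
    rw [← LinearMap.comp_apply, ← LinearMap.lTensor_comp]
    have hcomp : N.mkQ ∘ₗ N.subtype = 0 := by
      ext x; simpa using (Submodule.Quotient.mk_eq_zero N).2 x.2
    rw [hcomp]
    simp
  -- by descent of vanishing, `N = ⊤`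
  haveI := aux_subsingleton A hflat hcover (H ⧸ N) hzero
  have : N = ⊤ := Submodule.Quotient.subsingleton_iff.1 this
  exact Module.finite_def.2 (this ▸ hNfg)
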